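/- The tensor products of the a-translates of the exponential blender ψ form a bivariate partition of unity: for all x, y ∈ ℝ, the family (fun p : ℤ × ℤ => ψ(x − p.1·a) · ψ(y − p.2·a)) has sum 1. -/

import Mathlib

open Real

noncomputable def expBlender (s a : ℝ) (x : ℝ) : ℝ :=
  if x = 0 then 1
  else if a ≤ |x| then 0
  else 1 / (Real.exp (s * (1 / (1 - |x| / a) - 1 / (|x| / a))) + 1)

lemma expBlender_zero_of_le (s a : ℝ) (ha : 0 < a) {x : ℝ} (h : a ≤ |x|) :
    expBlender s a x = 0 := by
  have hx : x ≠ 0 := by rintro rfl; simp at h; linarith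
  rw [expBlender, if_neg hx, if_pos h]

lemma expBlender_pair (s a : ℝ) (ha : 0 < a) {t : ℝ} (h0 : 0 < t) (h1 : t < a) :
    expBlender s a t + expBlender s a (t - a) = 1 := by
  have habs1 : |t| = t := abs_of_pos h0
  have habs2 : |t - a| = a - t := by rw [abs_of_neg (by linarith)]; ring
  rw [expBlender, if_neg (ne_of_gt h0), if_neg (show ¬ a ≤ |t| by rw [habs1]; push_neg; linarith)]
  rw [expBlender, if_neg (show ¬ t - a = 0 by intro h; linarith),
    if_neg (show ¬ a ≤ |t - a| by rw [habs2]; push_neg; linarith), habs1, habs2]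
  have hexp : s * (1 / (1 - (a - t) / a) - 1 / ((a - t) / a))
      = -(s * (1 / (1 - t / a) - 1 / (t / a))) := by
    have h1' : (a - t) / a = 1 - t / a := by field_simp
    rw [h1']
    have ht : t / a ≠ 0 := by positivity
    have ht' : 1 - t / a ≠ 0 := by
      have : t / a < 1 := by rw [div_lt_one ha]; exact h1
      linarith
    field_simp
    rw [sub_sub_cancel, mul_sub, one_div, one_div, mul_inv_cancel_right₀ (ne_of_gt h0)]
    ring
  rw [hexp]
  set u := s * (1 / (1 - t / a) - 1 / (t / a))
  have h := Real.exp_pos u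
  rw [Real.exp_neg]
  field_simp
  ring

lemma expBlender_row (s a : ℝ) (ha : 0 < a) (x : ℝ) :
    ∃ F : Finset ℤ, (∀ n ∉ F, expBlender s a (x - n * a) = 0) ∧
      ∑ n ∈ F, expBlender s a (x - n * a) = 1 := by
  set m : ℤ := ⌊x / a⌋ with hm
  have hle : (m : ℝ) * a ≤ x := by
    have := Int.floor_le (x / a)
    calc (m : ℝ) * a ≤ (x / a) * a := by nlinarith
    _ = x := by field_simp
  have hlt : x < ((m : ℝ) + 1) * a := by
    have := Int.lt_floor_add_one (x / a)
    calc x = (x / a) * a := by field_simp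
    _ < ((m : ℝ) + 1) * a := by nlinarith
  refine ⟨{m, m + 1}, ?_, ?_⟩
  · intro n hn
    simp only [Finset.mem_insert, Finset.mem_singleton] at hn
    push_neg at hn
    apply expBlender_zero_of_le s a ha
    rcases lt_or_gt_of_ne hn.1 with h | h
    · have : n ≤ m - 1 := by omega
      have : (n : ℝ) ≤ (m : ℝ) - 1 := by exact_mod_cast this
      have : a ≤ x - n * a := by nlinarith
      rw [abs_of_pos (by linarith)] at *
      linarith
    · have : m + 2 ≤ n := by omega
      have : (m : ℝ) + 2 ≤ (n : ℝ) := by exact_mod_cast this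
      have : x - n * a ≤ -a := by nlinarith
      rw [abs_of_neg (by linarith)]
      linarith
  · rw [Finset.sum_insert (by simp), Finset.sum_singleton]
    rcases eq_or_lt_of_le hle with h | h
    · have h1 : x - (m : ℝ) * a = 0 := by linarith
      have h2 : x - ((m : ℤ) + 1 : ℤ) * a = -a := by push_cast; linarith
      rw [h1, h2, expBlender, if_pos rfl,
        expBlender_zero_of_le s a ha (by rw [abs_neg, abs_of_pos ha])]
      norm_num
    · have h2 : x - ((m : ℤ) + 1 : ℤ) * a = (x - m * a) - a := by push_cast; ring
      rw [h2]
      exact expBlender_pair s a ha (by linarith) (by nlinarith)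

theorem expBlender_bivariate_partition_of_unity (s a : ℝ) (hs : 0 < s) (ha : 0 < a)
    (x y : ℝ) :
    HasSum (fun p : ℤ × ℤ =>
      expBlender s a (x - p.1 * a) * expBlender s a (y - p.2 * a)) 1 := by
  obtain ⟨F, hF0, hF1⟩ := expBlender_row s a ha x
  obtain ⟨G, hG0, hG1⟩ := expBlender_row s a ha y
  have h := hasSum_sum_of_ne_finset_zero (s := F ×ˢ G) (L := SummationFilter.unconditional _)
    (f := fun p : ℤ × ℤ => expBlender s a (x - p.1 * a) * expBlender s a (y - p.2 * a)) ?_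
  · convert h using 1
    rw [Finset.sum_product]
    rw [← hF1]
    refine Eq.symm ?_
    calc ∑ i ∈ F, ∑ j ∈ G, expBlender s a (x - i * a) * expBlender s a (y - j * a)
        = ∑ i ∈ F, expBlender s a (x - i * a) * ∑ j ∈ G, expBlender s a (y - j * a) := by
          refine Finset.sum_congr rfl fun i _ => ?_
          rw [Finset.mul_sum]
    _ = ∑ i ∈ F, expBlender s a (x - i * a) := by
          refine Finset.sum_congr rfl fun i _ => ?_
          rw [hG1, mul_one]
  · intro p hp
    rw [Finset.mem_product] at hp
    push_neg at hp
    by_cases h1 : p.1 ∈ F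
    · rw [hG0 p.2 (hp h1), mul_zero]
    · rw [hF0 p.1 h1, zero_mul]
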